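/- arXiv:2011.14895 — 6 statements merged into one kernel-verified Lean document; each statement's English description precedes it below -/
import Mathlib

section
/- For every input x ∈ ℝ^{n_0}, the set of activation patterns compatible with the hyperplane pattern at x equals the set of activation patterns compatible with their own induced subjective hyperplane pattern at x, i.e. S^C(x) = S̃^C(x). -/
/-!
Formalization of the setting of "Deep ReLU Programming" (Hinz & van de Geer).

A feed-forward ReLU network with `L` hidden layers and widths `n 0, …, n (L+1)`
(`n (L+1) = 1` for a real-valued network) is encoded by the structure `Net L n`
below, where `W k : Matrix (Fin (n (k+1))) (Fin (n k)) ℝ` and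
`b k : Fin (n (k+1)) → ℝ` are the weight matrix and bias vector of layer `k+1`
(so the paper's `W_l, b_l` correspond to `W (l-1), b (l-1)` here).

A neuron `(l, j)` of the paper (layer `l ∈ {1, …, L}`, neuron `j`) is encoded as
the pair `⟨k, j⟩ : Idx n` with `k = l - 1`; membership in the index set `I`
corresponds to the condition `k < L`.
-/

noncomputable section
open Metric Filter Topology
open scoped Classical RealInnerProductSpace BigOperators

namespace DRLP

/-- Input space `ℝ^{n 0}` with the Euclidean metric and inner product. -/
abbrev Input (n : ℕ → ℕ) := EuclideanSpace ℝ (Fin (n 0))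

/-- Patterns: one real number for each neuron `⟨k, j⟩` (neuron `j` of layer `k+1`). -/
abbrev Pat (n : ℕ → ℕ) := ∀ k : ℕ, Fin (n (k+1)) → ℝ

/-- Neuron indices: `⟨k, j⟩` denotes neuron `j` of layer `k+1`. -/
abbrev Idx (n : ℕ → ℕ) := Σ k : ℕ, Fin (n (k+1))

/-- `s` is an activation pattern (element of `S = {0,1}^{n_1} × ⋯ × {0,1}^{n_L}`). -/
def IsPattern (L : ℕ) {n : ℕ → ℕ} (s : Pat n) : Prop :=
  ∀ k < L, ∀ j, s k j = 0 ∨ s k j = 1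

/-- Compatibility of a (hyperplane) pattern `h` with an activation pattern `s`:
`h_{lj} (s_{lj} - 0.5) ≥ 0` for all neurons `(l,j) ∈ I`. -/
def PatCompatible (L : ℕ) {n : ℕ → ℕ} (h s : Pat n) : Prop :=
  ∀ k < L, ∀ j, h k j * (s k j - 1/2) ≥ 0

/-- A feed-forward ReLU network with `L` hidden layers and widths `n 0, …, n (L+1)`. -/
structure Net (L : ℕ) (n : ℕ → ℕ) : Type where
  W : ∀ k : ℕ, Matrix (Fin (n (k+1))) (Fin (n k)) ℝ
  b : ∀ k : ℕ, Fin (n (k+1)) → ℝ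

namespace Net

variable {L : ℕ} {n : ℕ → ℕ} (N : Net L n)

/-- Output of layer `k` (entrywise ReLU applied); layer `0` is the input itself. -/
def hid (x : Input n) : (k : ℕ) → Fin (n k) → ℝ
  | 0 => fun i => x i
  | k + 1 => fun j => max ((N.W k).mulVec (hid x k) j + N.b k j) 0

/-- The ReLU arguments `A(x)`: pre-activation of neuron `j` in layer `k+1`. -/
def preact (x : Input n) (k : ℕ) (j : Fin (n (k+1))) : ℝ :=
  (N.W k).mulVec (N.hid x k) j + N.b k j

/-- The hyperplane pattern `H(x) = sign.(A(x))`. -/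
def Hpat (x : Input n) (k : ℕ) (j : Fin (n (k+1))) : ℝ :=
  Real.sign (N.preact x k j)

/-- Subjective hidden layers: activations frozen to the pattern `s`. -/
def shid (s : Pat n) (x : Input n) : (k : ℕ) → Fin (n k) → ℝ
  | 0 => fun i => x i
  | k + 1 => fun j => s k j * ((N.W k).mulVec (shid s x k) j + N.b k j)

/-- The subjective ReLU arguments `Ã_s(x)`. -/
def spreact (s : Pat n) (x : Input n) (k : ℕ) (j : Fin (n (k+1))) : ℝ :=
  (N.W k).mulVec (N.shid s x k) j + N.b k j

/-- The subjective hyperplane pattern `H̃_s(x) = sign.(Ã_s(x))`. -/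
def sHpat (s : Pat n) (x : Input n) (k : ℕ) (j : Fin (n (k+1))) : ℝ :=
  Real.sign (N.spreact s x k j)

/-- `S^C(x)`: activation patterns compatible with the hyperplane pattern `H(x)`. -/
def SC (x : Input n) : Set (Pat n) :=
  {s | IsPattern L s ∧ PatCompatible L (N.Hpat x) s}

/-- `S̃^C(x)`: activation patterns compatible with their own induced subjective
hyperplane pattern `H̃_s(x)`. -/
def SCtilde (x : Input n) : Set (Pat n) :=
  {s | IsPattern L s ∧ PatCompatible L (N.sHpat s x) s}

/-- `C(x)`: critical indices, i.e. neurons whose hyperplane pattern is non-constant in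
every neighbourhood of `x`. -/
def Critical (x : Input n) (p : Idx n) : Prop :=
  p.1 < L ∧ ∀ ε > 0, ∃ y z : Input n, dist y x < ε ∧ dist z x < ε ∧
    N.Hpat y p.1 p.2 ≠ N.Hpat z p.1 p.2

/-- `C̃_s(x)`: subjective critical indices. -/
def sCritical (s : Pat n) (x : Input n) (p : Idx n) : Prop :=
  p.1 < L ∧ ∀ ε > 0, ∃ y z : Input n, dist y x < ε ∧ dist z x < ε ∧
    N.sHpat s y p.1 p.2 ≠ N.sHpat s z p.1 p.2

/-- The critical kernel `Ker^C(x)`. -/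
def KerC (x : Input n) : Set (Input n) :=
  {v | ∃ ε > 0, ∀ t : ℝ, |t| < ε → ∀ p : Idx n, p.1 < L →
    N.Hpat (x + t • v) p.1 p.2 = N.Hpat x p.1 p.2}

/-- The subjective critical kernel `K̃er^C_s(x)`. -/
def sKerC (s : Pat n) (x : Input n) : Set (Input n) :=
  {v | ∃ ε > 0, ∀ t : ℝ, |t| < ε → ∀ p : Idx n, p.1 < L →
    N.sHpat s (x + t • v) p.1 p.2 = N.sHpat s x p.1 p.2}

/-- Critical degrees of freedom `df^C(x) = dim Ker^C(x)`. -/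
def dfC (x : Input n) : ℕ :=
  Module.finrank ℝ (Submodule.span ℝ (N.KerC x))

/-- `x` is a vertex iff `df^C(x) = 0`. -/
def IsVertex (x : Input n) : Prop := N.dfC x = 0

/-- The matrix `W_{k+1} diag(s_k) W_k ⋯ diag(s_1) W_1`. -/
def sMat (s : Pat n) : (k : ℕ) → Matrix (Fin (n (k+1))) (Fin (n 0)) ℝ
  | 0 => N.W 0
  | k + 1 => N.W (k+1) * Matrix.diagonal (s k) * sMat s k

/-- The normal vector `ṽ_{s,l,j}` (transpose of the `j`-th row of
`W_l diag(s_{l-1}) ⋯ diag(s_1) W_1`). -/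
def nvec (s : Pat n) (p : Idx n) : Input n :=
  WithLp.toLp 2 (fun i => N.sMat s p.1 p.2 i)

/-- The oriented normal vector `ũ_{s,l,j}`. -/
def onvec (s : Pat n) (p : Idx n) : Input n :=
  if s p.1 p.2 = 1 then N.nvec s p else -N.nvec s p

/-- The gradient `∇_s = (W_{L+1} diag(s_L) ⋯ diag(s_1) W_1)ᵀ ∈ ℝ^{n_0}`. -/
def grad (h1 : n (L+1) = 1) (s : Pat n) : Input n :=
  N.nvec s ⟨L, Fin.cast h1.symm 0⟩

/-- The (real-valued) network function `f`. -/
def fnet (h1 : n (L+1) = 1) (x : Input n) : ℝ :=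
  N.preact x L (Fin.cast h1.symm 0)

/-- The subjective network function `f̃_s`. -/
def sfnet (h1 : n (L+1) = 1) (s : Pat n) (x : Input n) : ℝ :=
  N.spreact s x L (Fin.cast h1.symm 0)

/-- The feasible directions `D̃_s(x)`. -/
def Dfeas (s : Pat n) (x : Input n) : Set (Input n) :=
  {v | ∃ ε > 0, s ∈ N.SC (x + ε • v)}

/-- `x` is a regular point: for every compatible activation pattern `s ∈ S^C(x)`, the
normal vectors at the subjective critical indices are linearly independent. -/
def RegularPoint (x : Input n) : Prop :=
  ∀ s ∈ N.SC x, LinearIndependent ℝ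
    (fun p : {p : Idx n // N.sCritical s x p} => N.nvec s p.1)

/-- The network is regular if every point is a regular point. -/
def Regular : Prop := ∀ x : Input n, N.RegularPoint x

/-- `w` is the feasible axis `ã_{x,s,l,j}` at `x` for the activation pattern `s` and the
critical index `p = (l,j)`: it pairs to `1` with the oriented normal vector of `p` and
to `0` with the oriented normal vectors of all other critical indices of `x`. -/
def IsAxis (x : Input n) (s : Pat n) (p : Idx n) (w : Input n) : Prop :=
  ∀ q : Idx n, N.Critical x q → ⟪w, N.onvec s q⟫ = if p = q then 1 else 0

/-- The region separating axes `𝒜(x)`. -/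
def RegionSepAxes (x : Input n) : Set (Input n) :=
  {w | ∃ s ∈ N.SC x, ∃ p : Idx n, N.Critical x p ∧ N.IsAxis x s p w}

end Net

lemma key_aux (s a : ℝ) (hs : s = 0 ∨ s = 1) (h : Real.sign a * (s - 1/2) ≥ 0) :
    s * a = max a 0 := by
  rcases hs with h0 | h1
  · subst h0
    have ha : a ≤ 0 := by
      by_contra hc
      push_neg at hc
      rw [Real.sign_of_pos hc] at h
      linarith
    simp [max_eq_right ha]
  · subst h1
    have ha : 0 ≤ a := by
      by_contra hc
      push_neg at hc
      rw [Real.sign_of_neg hc] at h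
      linarith
    simp [max_eq_left ha]

lemma shid_eq_A {L : ℕ} {n : ℕ → ℕ} (N : Net L n) (s : Pat n) (x : Input n)
    (hs : IsPattern L s) (h : PatCompatible L (N.Hpat x) s) :
    ∀ k ≤ L, N.shid s x k = N.hid x k := by
  intro k hk
  induction k with
  | zero => rfl
  | succ k ih =>
    have hkL : k < L := hk
    have ih' := ih hkL.le
    funext j
    simp only [Net.shid, Net.hid, ih']
    exact key_aux _ _ (hs k hkL j) (h k hkL j)

lemma shid_eq_B {L : ℕ} {n : ℕ → ℕ} (N : Net L n) (s : Pat n) (x : Input n)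
    (hs : IsPattern L s) (h : PatCompatible L (N.sHpat s x) s) :
    ∀ k ≤ L, N.shid s x k = N.hid x k := by
  intro k hk
  induction k with
  | zero => rfl
  | succ k ih =>
    have hkL : k < L := hk
    have ih' := ih hkL.le
    funext j
    have h' := h k hkL j
    simp only [Net.sHpat, Net.spreact, ih'] at h'
    simp only [Net.shid, Net.hid, ih']
    exact key_aux _ _ (hs k hkL j) h'

/-- Theorem 1(1) of "Deep ReLU Programming": for every input `x`,
`S^C(x) = S̃^C(x)`. -/
theorem statement0 {L : ℕ} {n : ℕ → ℕ} (N : Net L n) (x : Input n) :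
    N.SC x = N.SCtilde x := by
  ext s
  simp only [Net.SC, Net.SCtilde, Set.mem_setOf_eq]
  constructor
  · rintro ⟨hp, hc⟩
    refine ⟨hp, fun k hk j => ?_⟩
    have heq := shid_eq_A N s x hp hc k hk.le
    have : N.sHpat s x k j = N.Hpat x k j := by
      simp [Net.sHpat, Net.Hpat, Net.spreact, Net.preact, heq]
    rw [this]
    exact hc k hk j
  · rintro ⟨hp, hc⟩
    refine ⟨hp, fun k hk j => ?_⟩
    have heq := shid_eq_B N s x hp hc k hk.le
    have : N.sHpat s x k j = N.Hpat x k j := by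
      simp [Net.sHpat, Net.Hpat, Net.spreact, Net.preact, heq]
    rw [← this]
    exact hc k hk j

end DRLP
end
end

section
/- For every input x ∈ ℝ^{n_0} and every compatible activation pattern s ∈ S^C(x), the set of inputs with the same objective hyperplane pattern as x equals the set of inputs with the same subjective hyperplane pattern as x: {y ∈ ℝ^{n_0} : H(y)=H(x)} = {y ∈ ℝ^{n_0} : H̃_s(y)=H̃_s(x)}. -/
/-!
Formalization of the setting of "Deep ReLU Programming" (Hinz & van de Geer).

A feed-forward ReLU network with `L` hidden layers and widths `n 0, …, n (L+1)`
(`n (L+1) = 1` for a real-valued network) is encoded by the structure `Net L n`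
below, where `W k : Matrix (Fin (n (k+1))) (Fin (n k)) ℝ` and
`b k : Fin (n (k+1)) → ℝ` are the weight matrix and bias vector of layer `k+1`
(so the paper's `W_l, b_l` correspond to `W (l-1), b (l-1)` here).

A neuron `(l, j)` of the paper (layer `l ∈ {1, …, L}`, neuron `j`) is encoded as
the pair `⟨k, j⟩ : Idx n` with `k = l - 1`; membership in the index set `I`
corresponds to the condition `k < L`.
-/

noncomputable section
open Metric Filter Topology
open scoped Classical RealInnerProductSpace BigOperators

namespace DRLP

lemma shid_eq_hid {L : ℕ} {n : ℕ → ℕ} (N : Net L n) (s : Pat n) (y : Input n)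
    (hsP : IsPattern L s)
    (hc : ∀ k < L, ∀ j, Real.sign (N.preact y k j) * (s k j - 1/2) ≥ 0 ∨
        Real.sign (N.spreact s y k j) * (s k j - 1/2) ≥ 0) :
    ∀ k, k ≤ L → N.shid s y k = N.hid y k := by
  intro k
  induction k with
  | zero => intro _; rfl
  | succ k ih =>
    intro hk
    have hk' : k < L := hk
    have heq := ih (le_of_lt hk')
    funext j
    have hpre : N.spreact s y k j = N.preact y k j := by
      simp [Net.spreact, Net.preact, heq]
    have hc' : Real.sign (N.preact y k j) * (s k j - 1/2) ≥ 0 := by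
      rcases hc k hk' j with h | h
      · exact h
      · rwa [hpre] at h
    show s k j * ((N.W k).mulVec (N.shid s y k) j + N.b k j)
        = max ((N.W k).mulVec (N.hid y k) j + N.b k j) 0
    rw [heq]
    have ht : N.preact y k j = (N.W k).mulVec (N.hid y k) j + N.b k j := rfl
    set t := (N.W k).mulVec (N.hid y k) j + N.b k j with htdef
    rw [ht] at hc'
    rcases hsP k hk' j with h0 | h1
    · rw [h0, zero_mul]
      have hle : t ≤ 0 := by
        by_contra h
        push_neg at h
        rw [Real.sign_of_pos h, h0] at hc'
        norm_num at hc'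
      rw [max_eq_right hle]
    · rw [h1, one_mul]
      have hge : 0 ≤ t := by
        by_contra h
        push_neg at h
        rw [Real.sign_of_neg h, h1] at hc'
        norm_num at hc'
      rw [max_eq_left hge]

lemma sHpat_eq_Hpat {L : ℕ} {n : ℕ → ℕ} (N : Net L n) (s : Pat n) (y : Input n)
    (hsP : IsPattern L s)
    (hc : ∀ k < L, ∀ j, Real.sign (N.preact y k j) * (s k j - 1/2) ≥ 0 ∨
        Real.sign (N.spreact s y k j) * (s k j - 1/2) ≥ 0) :
    ∀ k < L, ∀ j, N.sHpat s y k j = N.Hpat y k j := by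
  intro k hk j
  have heq := shid_eq_hid N s y hsP hc k (le_of_lt hk)
  simp [Net.sHpat, Net.Hpat, Net.spreact, Net.preact, heq]

/-- Corollary 2: for every `x` and every compatible `s ∈ S^C(x)`,
`{y : H(y) = H(x)} = {y : H̃_s(y) = H̃_s(x)}`. -/
theorem statement3 {L : ℕ} {n : ℕ → ℕ} (N : Net L n) (x : Input n) (s : Pat n)
    (hs : s ∈ N.SC x) :
    {y : Input n | ∀ p : Idx n, p.1 < L → N.Hpat y p.1 p.2 = N.Hpat x p.1 p.2} =
      {y : Input n | ∀ p : Idx n, p.1 < L → N.sHpat s y p.1 p.2 = N.sHpat s x p.1 p.2} := by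
  obtain ⟨hsP, hsC⟩ := hs
  have hx : ∀ k < L, ∀ j, N.sHpat s x k j = N.Hpat x k j :=
    sHpat_eq_Hpat N s x hsP (fun k hk j => Or.inl (hsC k hk j))
  ext y
  simp only [Set.mem_setOf_eq]
  constructor
  · intro hy
    have hcy : ∀ k < L, ∀ j, Real.sign (N.preact y k j) * (s k j - 1/2) ≥ 0 := by
      intro k hk j
      have : N.Hpat y k j = N.Hpat x k j := hy ⟨k, j⟩ hk
      rw [show Real.sign (N.preact y k j) = N.Hpat y k j from rfl, this]
      exact hsC k hk j
    have hy' := sHpat_eq_Hpat N s y hsP (fun k hk j => Or.inl (hcy k hk j))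
    intro p hp
    rw [hy' p.1 hp p.2, hy p hp, hx p.1 hp p.2]
  · intro hy
    have hcy : ∀ k < L, ∀ j, Real.sign (N.spreact s y k j) * (s k j - 1/2) ≥ 0 := by
      intro k hk j
      have : N.sHpat s y k j = N.Hpat x k j := by
        rw [hy ⟨k, j⟩ hk, hx k hk j]
      rw [show Real.sign (N.spreact s y k j) = N.sHpat s y k j from rfl, this]
      exact hsC k hk j
    have hy' := sHpat_eq_Hpat N s y hsP (fun k hk j => Or.inr (hcy k hk j))
    intro p hp
    rw [← hy' p.1 hp p.2, hy p hp, hx p.1 hp p.2]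

end DRLP
end
end

section
/- For every x ∈ ℝ^{n_0} and every compatible activation pattern s ∈ S^C(x), the critical kernel equals the subjective critical kernel: Ker^C(x) = K̃er^C_s(x). -/
/-!
Formalization of the setting of "Deep ReLU Programming" (Hinz & van de Geer).

A feed-forward ReLU network with `L` hidden layers and widths `n 0, …, n (L+1)`
(`n (L+1) = 1` for a real-valued network) is encoded by the structure `Net L n`
below, where `W k : Matrix (Fin (n (k+1))) (Fin (n k)) ℝ` and
`b k : Fin (n (k+1)) → ℝ` are the weight matrix and bias vector of layer `k+1`
(so the paper's `W_l, b_l` correspond to `W (l-1), b (l-1)` here).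

A neuron `(l, j)` of the paper (layer `l ∈ {1, …, L}`, neuron `j`) is encoded as
the pair `⟨k, j⟩ : Idx n` with `k = l - 1`; membership in the index set `I`
corresponds to the condition `k < L`.
-/

noncomputable section
open Metric Filter Topology
open scoped Classical RealInnerProductSpace BigOperators

namespace DRLP

private lemma aux_mul (a t : ℝ) (ht : t = 0 ∨ t = 1)
    (h : Real.sign a * (t - 1/2) ≥ 0) : t * a = max a 0 := by
  rcases ht with rfl | rfl
  · have ha : a ≤ 0 := by
      by_contra hc
      push_neg at hc
      rw [Real.sign_of_pos hc] at h
      norm_num at h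
    simp [max_eq_right ha]
  · have ha : 0 ≤ a := by
      by_contra hc
      push_neg at hc
      rw [Real.sign_of_neg hc] at h
      norm_num at h
    simp [max_eq_left ha]

namespace Net

variable {L : ℕ} {n : ℕ → ℕ} (N : Net L n)

private lemma shid_eq_of_preact (s : Pat n) (y : Input n)
    (h : ∀ k < L, ∀ j, s k j * N.preact y k j = max (N.preact y k j) 0) :
    ∀ k, k ≤ L → N.shid s y k = N.hid y k := by
  intro k
  induction k with
  | zero => intro _; rfl
  | succ k ih =>
    intro hk
    have ihk := ih (Nat.le_of_succ_le hk)
    funext j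
    show s k j * ((N.W k).mulVec (N.shid s y k) j + N.b k j)
        = max ((N.W k).mulVec (N.hid y k) j + N.b k j) 0
    rw [ihk]
    exact h k (Nat.lt_of_succ_le hk) j

private lemma shid_eq_of_spreact (s : Pat n) (y : Input n)
    (h : ∀ k < L, ∀ j, s k j * N.spreact s y k j = max (N.spreact s y k j) 0) :
    ∀ k, k ≤ L → N.shid s y k = N.hid y k := by
  intro k
  induction k with
  | zero => intro _; rfl
  | succ k ih =>
    intro hk
    have ihk := ih (Nat.le_of_succ_le hk)
    funext j
    have hh := h k (Nat.lt_of_succ_le hk) j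
    have heq : N.spreact s y k j = N.preact y k j := by
      unfold Net.spreact Net.preact
      rw [ihk]
    show s k j * N.spreact s y k j = max (N.preact y k j) 0
    rw [heq] at hh ⊢
    exact hh

private lemma spreact_eq_of_compat (s : Pat n) (hp : IsPattern L s) (y : Input n)
    (hc : PatCompatible L (N.Hpat y) s) :
    ∀ k, k ≤ L → N.spreact s y k = N.preact y k := by
  have hsh := N.shid_eq_of_preact s y
    (fun k hk j => aux_mul (N.preact y k j) (s k j) (hp k hk j) (hc k hk j))
  intro k hk
  funext j
  unfold Net.spreact Net.preact
  rw [hsh k hk]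

private lemma spreact_eq_of_scompat (s : Pat n) (hp : IsPattern L s) (y : Input n)
    (hc : PatCompatible L (N.sHpat s y) s) :
    ∀ k, k ≤ L → N.spreact s y k = N.preact y k := by
  have hsh := N.shid_eq_of_spreact s y
    (fun k hk j => aux_mul (N.spreact s y k j) (s k j) (hp k hk j) (hc k hk j))
  intro k hk
  funext j
  unfold Net.spreact Net.preact
  rw [hsh k hk]

end Net

/-- Lemma 2: for every `x` and every compatible `s ∈ S^C(x)`, the critical
kernel equals the subjective critical kernel: `Ker^C(x) = K̃er^C_s(x)`. -/
theorem statement5 {L : ℕ} {n : ℕ → ℕ} (N : Net L n) (x : Input n) (s : Pat n)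
    (hs : s ∈ N.SC x) :
    N.KerC x = N.sKerC s x := by
  obtain ⟨hp, hc⟩ := hs
  have hbase : ∀ k, k ≤ L → N.spreact s x k = N.preact x k :=
    N.spreact_eq_of_compat s hp x hc
  ext v
  simp only [Net.KerC, Net.sKerC, Set.mem_setOf_eq]
  constructor
  · rintro ⟨ε, hε, hker⟩
    refine ⟨ε, hε, fun t ht p hpL => ?_⟩
    have hcy : PatCompatible L (N.Hpat (x + t • v)) s := by
      intro k hk j
      have hH : N.Hpat (x + t • v) k j = N.Hpat x k j := hker t ht ⟨k, j⟩ hk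
      rw [hH]
      exact hc k hk j
    have h1 := N.spreact_eq_of_compat s hp (x + t • v) hcy p.1 (le_of_lt hpL)
    show Real.sign (N.spreact s (x + t • v) p.1 p.2)
        = Real.sign (N.spreact s x p.1 p.2)
    rw [h1, hbase p.1 (le_of_lt hpL)]
    exact hker t ht p hpL
  · rintro ⟨ε, hε, hker⟩
    refine ⟨ε, hε, fun t ht p hpL => ?_⟩
    have hsx : ∀ k < L, ∀ j, N.sHpat s x k j = N.Hpat x k j := by
      intro k hk j
      show Real.sign (N.spreact s x k j) = Real.sign (N.preact x k j)
      rw [hbase k (le_of_lt hk)]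
    have hcy : PatCompatible L (N.sHpat s (x + t • v)) s := by
      intro k hk j
      have hH : N.sHpat s (x + t • v) k j = N.sHpat s x k j := hker t ht ⟨k, j⟩ hk
      rw [hH, hsx k hk j]
      exact hc k hk j
    have h1 := N.spreact_eq_of_scompat s hp (x + t • v) hcy p.1 (le_of_lt hpL)
    show Real.sign (N.preact (x + t • v) p.1 p.2) = Real.sign (N.preact x p.1 p.2)
    rw [← h1, ← hbase p.1 (le_of_lt hpL)]
    exact hker t ht p hpL


end DRLP
end
end

section
/- For every x ∈ ℝ^{n_0} and every activation pattern s ∈ S, the subjective critical kernel equals the intersection of the solution sets of the linear equations given by the subjective critical indices: K̃er^C_s(x) = ⋂_{(l,j) ∈ C̃_s(x)} {v ∈ ℝ^{n_0} : Ã_s(x+v)_{lj} = 0}. -/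
/-!
Formalization of the setting of "Deep ReLU Programming" (Hinz & van de Geer).

A feed-forward ReLU network with `L` hidden layers and widths `n 0, …, n (L+1)`
(`n (L+1) = 1` for a real-valued network) is encoded by the structure `Net L n`
below, where `W k : Matrix (Fin (n (k+1))) (Fin (n k)) ℝ` and
`b k : Fin (n (k+1)) → ℝ` are the weight matrix and bias vector of layer `k+1`
(so the paper's `W_l, b_l` correspond to `W (l-1), b (l-1)` here).

A neuron `(l, j)` of the paper (layer `l ∈ {1, …, L}`, neuron `j`) is encoded as
the pair `⟨k, j⟩ : Idx n` with `k = l - 1`; membership in the index set `I`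
corresponds to the condition `k < L`.
-/

noncomputable section
open Metric Filter Topology
open scoped Classical RealInnerProductSpace BigOperators

namespace DRLP

namespace Net

variable {L : ℕ} {n : ℕ → ℕ} (N : Net L n)

/-- Linear part of the subjective hidden layers (zero-bias version). -/
def lhid (s : Pat n) (v : Input n) : (k : ℕ) → Fin (n k) → ℝ
  | 0 => fun i => v i
  | k + 1 => fun j => s k j * ((N.W k).mulVec (lhid s v k) j)

lemma shid_add (s : Pat n) (x v : Input n) (k : ℕ) :
    N.shid s (x + v) k = N.shid s x k + N.lhid s v k := by
  induction k with
  | zero => rfl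
  | succ k ih =>
    funext j
    simp only [Net.shid, Net.lhid, Pi.add_apply]
    rw [ih, Matrix.mulVec_add]
    simp only [Pi.add_apply]
    ring

lemma lhid_add (s : Pat n) (v w : Input n) (k : ℕ) :
    N.lhid s (v + w) k = N.lhid s v k + N.lhid s w k := by
  induction k with
  | zero => rfl
  | succ k ih =>
    funext j
    simp only [Net.lhid, Pi.add_apply]
    rw [ih, Matrix.mulVec_add]
    simp only [Pi.add_apply]
    ring

lemma lhid_smul (s : Pat n) (t : ℝ) (v : Input n) (k : ℕ) :
    N.lhid s (t • v) k = t • N.lhid s v k := by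
  induction k with
  | zero => rfl
  | succ k ih =>
    funext j
    simp only [Net.lhid, Pi.smul_apply, smul_eq_mul]
    rw [ih, Matrix.mulVec_smul]
    simp only [Pi.smul_apply, smul_eq_mul]
    ring

/-- Linear part of the subjective pre-activation. -/
def lpre (s : Pat n) (v : Input n) (k : ℕ) (j : Fin (n (k+1))) : ℝ :=
  (N.W k).mulVec (N.lhid s v k) j

lemma spreact_add (s : Pat n) (x v : Input n) (k : ℕ) (j : Fin (n (k+1))) :
    N.spreact s (x + v) k j = N.spreact s x k j + N.lpre s v k j := by
  unfold spreact lpre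
  rw [shid_add, Matrix.mulVec_add]
  simp only [Pi.add_apply]
  ring

lemma lpre_smul (s : Pat n) (t : ℝ) (v : Input n) (k : ℕ) (j : Fin (n (k+1))) :
    N.lpre s (t • v) k j = t * N.lpre s v k j := by
  unfold lpre
  rw [lhid_smul, Matrix.mulVec_smul]
  simp

/-- The linear part as a bundled linear map. -/
def lpreL (s : Pat n) (k : ℕ) (j : Fin (n (k+1))) : Input n →ₗ[ℝ] ℝ where
  toFun v := N.lpre s v k j
  map_add' v w := by
    show N.lpre s (v + w) k j = N.lpre s v k j + N.lpre s w k j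
    unfold lpre; rw [N.lhid_add, Matrix.mulVec_add]; simp
  map_smul' t v := by
    show N.lpre s (t • v) k j = t * N.lpre s v k j
    exact N.lpre_smul s t v k j

lemma spreact_continuous (s : Pat n) (x : Input n) (k : ℕ) (j : Fin (n (k+1))) :
    Continuous fun y : Input n => N.spreact s y k j := by
  have h : ∀ y : Input n, N.spreact s y k j
      = N.spreact s x k j + N.lpreL s k j (y - x) := by
    intro y
    have := N.spreact_add s x (y - x) k j
    rw [add_sub_cancel] at this
    exact this
  simp only [funext h]
  exact continuous_const.add
    ((N.lpreL s k j).continuous_of_finiteDimensional.comp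
      (continuous_id.sub continuous_const))

lemma sCritical_preact_eq_zero (s : Pat n) (x : Input n) (p : Idx n)
    (h : N.sCritical s x p) : N.spreact s x p.1 p.2 = 0 := by
  obtain ⟨hL, hcrit⟩ := h
  by_contra hα
  have hcont := N.spreact_continuous s x p.1 p.2
  have hopen : ∃ δ > 0, ∀ y : Input n, dist y x < δ →
      N.sHpat s y p.1 p.2 = N.sHpat s x p.1 p.2 := by
    rcases lt_or_gt_of_ne hα with hneg | hpos
    · have hU : IsOpen {y : Input n | N.spreact s y p.1 p.2 < 0} :=
        isOpen_lt hcont continuous_const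
      obtain ⟨δ, hδ, hball⟩ := Metric.isOpen_iff.1 hU x hneg
      refine ⟨δ, hδ, fun y hy => ?_⟩
      have h1 : N.spreact s y p.1 p.2 < 0 := hball hy
      simp [Net.sHpat, Real.sign_of_neg h1, Real.sign_of_neg hneg]
    · have hU : IsOpen {y : Input n | 0 < N.spreact s y p.1 p.2} :=
        isOpen_lt continuous_const hcont
      obtain ⟨δ, hδ, hball⟩ := Metric.isOpen_iff.1 hU x hpos
      refine ⟨δ, hδ, fun y hy => ?_⟩
      have h1 : 0 < N.spreact s y p.1 p.2 := hball hy
      simp [Net.sHpat, Real.sign_of_pos h1, Real.sign_of_pos hpos]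
  obtain ⟨δ, hδ, hconst⟩ := hopen
  obtain ⟨y, z, hy, hz, hne⟩ := hcrit δ hδ
  exact hne ((hconst y hy).trans (hconst z hz).symm)

end Net

/-- Lemma 3: for every `x` and every activation pattern `s ∈ S`,
`K̃er^C_s(x) = ⋂_{(l,j) ∈ C̃_s(x)} {v : Ã_s(x+v)_{lj} = 0}`. -/
theorem statement6 {L : ℕ} {n : ℕ → ℕ} (N : Net L n) (x : Input n) (s : Pat n)
    (hS : IsPattern L s) :
    N.sKerC s x =
      ⋂ p ∈ {p : Idx n | N.sCritical s x p},
        {v : Input n | N.spreact s (x + v) p.1 p.2 = 0} := by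
  ext v
  simp only [Set.mem_iInter, Set.mem_setOf_eq]
  constructor
  · rintro ⟨ε, hε, hker⟩ p hp
    have hα := N.sCritical_preact_eq_zero s x p hp
    set t : ℝ := min (ε / 2) 1 with ht
    have htpos : 0 < t := lt_min (by linarith) one_pos
    have htε : |t| < ε := by
      rw [abs_of_pos htpos]
      calc t ≤ ε / 2 := min_le_left _ _
        _ < ε := by linarith
    have h1 := hker t htε p hp.1
    have h2 : N.sHpat s (x + t • v) p.1 p.2 = Real.sign (t * N.lpre s v p.1 p.2) := by
      rw [Net.sHpat, N.spreact_add, hα, zero_add, N.lpre_smul]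
    have h3 : N.sHpat s x p.1 p.2 = 0 := by
      rw [Net.sHpat, hα, Real.sign_zero]
    rw [h2, h3] at h1
    have h4 : t * N.lpre s v p.1 p.2 = 0 := Real.sign_eq_zero_iff.1 h1
    have h5 : N.lpre s v p.1 p.2 = 0 := by
      rcases mul_eq_zero.1 h4 with h | h
      · exact absurd h htpos.ne'
      · exact h
    rw [N.spreact_add, hα, h5, add_zero]
  · intro hv
    have hfin : {p : Idx n | p.1 < L}.Finite := by
      have hsub : {p : Idx n | p.1 < L} ⊆
          Set.range (fun q : (Σ k : Fin L, Fin (n (k+1))) => (⟨q.1, q.2⟩ : Idx n)) := by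
        rintro ⟨k, j⟩ hk
        exact ⟨⟨⟨k, hk⟩, j⟩, rfl⟩
      exact (Set.finite_range _).subset hsub
    have hev : ∀ p ∈ {p : Idx n | p.1 < L}, ∀ᶠ t : ℝ in 𝓝 0,
        N.sHpat s (x + t • v) p.1 p.2 = N.sHpat s x p.1 p.2 := by
      intro p hpL
      by_cases hc : N.sCritical s x p
      · -- critical index: linear part vanishes
        have hα := N.sCritical_preact_eq_zero s x p hc
        have h0 := hv p hc
        rw [N.spreact_add, hα, zero_add] at h0
        refine Filter.Eventually.of_forall fun t => ?_
        rw [Net.sHpat, Net.sHpat, N.spreact_add, N.lpre_smul, h0, mul_zero, add_zero]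
      · -- non-critical index: the subjective pattern is locally constant
        rw [Net.sCritical] at hc
        push_neg at hc
        obtain ⟨δ, hδ, hconst⟩ := hc hpL
        have hmem : ∀ᶠ t : ℝ in 𝓝 0, |t| * ‖v‖ < δ := by
          have : ∀ᶠ t : ℝ in 𝓝 0, t ∈ Metric.ball (0:ℝ) (δ / (‖v‖ + 1)) :=
            Metric.ball_mem_nhds 0 (by positivity)
          filter_upwards [this] with t ht
          rw [Metric.mem_ball, Real.dist_eq, sub_zero] at ht
          have h1 : |t| * ‖v‖ ≤ |t| * (‖v‖ + 1) := by
            apply mul_le_mul_of_nonneg_left (by linarith) (abs_nonneg t)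
          have h2 : |t| * (‖v‖ + 1) < δ := by
            rw [← lt_div_iff₀ (by positivity)]
            exact ht
          linarith
        filter_upwards [hmem] with t ht
        have hd : dist (x + t • v) x < δ := by
          rw [dist_eq_norm, add_sub_cancel_left, norm_smul, Real.norm_eq_abs]
          exact ht
        exact hconst (x + t • v) x hd (by simpa using hδ)
    have := (Filter.eventually_all_finite hfin).2 hev
    rw [Metric.eventually_nhds_iff] at this
    obtain ⟨ε, hε, hball⟩ := this
    refine ⟨ε, hε, fun t htε p hpL => ?_⟩
    have : dist t 0 < ε := by rwa [Real.dist_eq, sub_zero]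
    exact hball this p hpL

end DRLP
end
end

section
/- For every x ∈ ℝ^{n_0} there exists ε* > 0 such that B_{ε*}(0) ∩ {v ∈ ℝ^{n_0} : H(x+v) = H(x)} = B_{ε*}(0) ∩ Ker^C(x); that is, locally around x the set of inputs with unchanged hyperplane pattern is exactly the affine subspace x + Ker^C(x). -/
/-!
Formalization of the setting of "Deep ReLU Programming" (Hinz & van de Geer).

A feed-forward ReLU network with `L` hidden layers and widths `n 0, …, n (L+1)`
(`n (L+1) = 1` for a real-valued network) is encoded by the structure `Net L n`
below, where `W k : Matrix (Fin (n (k+1))) (Fin (n k)) ℝ` and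
`b k : Fin (n (k+1)) → ℝ` are the weight matrix and bias vector of layer `k+1`
(so the paper's `W_l, b_l` correspond to `W (l-1), b (l-1)` here).

A neuron `(l, j)` of the paper (layer `l ∈ {1, …, L}`, neuron `j`) is encoded as
the pair `⟨k, j⟩ : Idx n` with `k = l - 1`; membership in the index set `I`
corresponds to the condition `k < L`.
-/

noncomputable section
open Metric Filter Topology
open scoped Classical RealInnerProductSpace BigOperators

namespace DRLP

namespace Net

variable {L : ℕ} {n : ℕ → ℕ} (N : Net L n)

lemma shid_affine (s : Pat n) (a b : Input n) (t : ℝ) :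
    ∀ (k : ℕ) (j : Fin (n k)), N.shid s ((1-t) • a + t • b) k j
      = (1-t) * N.shid s a k j + t * N.shid s b k j
  | 0, j => by
      simp [shid, PiLp.add_apply, PiLp.smul_apply, smul_eq_mul]
  | (k+1), j => by
      have IH : N.shid s ((1-t) • a + t • b) k
          = (1-t) • N.shid s a k + t • N.shid s b k :=
        funext fun i => by
          simpa [Pi.add_apply, Pi.smul_apply, smul_eq_mul] using
            shid_affine s a b t k i
      simp only [shid, IH, Matrix.mulVec_add, Matrix.mulVec_smul,
        Pi.add_apply, Pi.smul_apply, smul_eq_mul]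
      ring

lemma spreact_affine (s : Pat n) (a b : Input n) (t : ℝ) (k : ℕ) (j : Fin (n (k+1))) :
    N.spreact s ((1-t) • a + t • b) k j
      = (1-t) * N.spreact s a k j + t * N.spreact s b k j := by
  have IH : N.shid s ((1-t) • a + t • b) k
      = (1-t) • N.shid s a k + t • N.shid s b k :=
    funext fun i => by
      simpa [Pi.add_apply, Pi.smul_apply, smul_eq_mul] using
        N.shid_affine s a b t k i
  simp only [spreact, IH, Matrix.mulVec_add, Matrix.mulVec_smul,
    Pi.add_apply, Pi.smul_apply, smul_eq_mul]
  ring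

lemma spreact_line (s : Pat n) (x v : Input n) (t : ℝ) (k : ℕ) (j : Fin (n (k+1))) :
    N.spreact s (x + t • v) k j
      = (1-t) * N.spreact s x k j + t * N.spreact s (x + v) k j := by
  have h : x + t • v = (1-t) • x + t • (x + v) := by
    rw [smul_add, sub_smul, one_smul]; abel
  rw [h, spreact_affine]

lemma hid_eq_shid (s : Pat n) (y : Input n) :
    ∀ (k : ℕ), (∀ k' < k, ∀ j, max (N.preact y k' j) 0 = s k' j * N.preact y k' j) →
      N.hid y k = N.shid s y k
  | 0, _ => rfl
  | (k+1), h => by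
      have IH : N.hid y k = N.shid s y k :=
        hid_eq_shid s y k fun k' hk' j => h k' (Nat.lt_succ_of_lt hk') j
      funext j
      have h1 : N.hid y (k+1) j = max (N.preact y k j) 0 := rfl
      have h2 : N.preact y k j = N.spreact s y k j := by
        simp only [preact, spreact, IH]
      rw [h1, h k (Nat.lt_succ_self k) j, h2]
      rfl

lemma continuous_hid : ∀ (k : ℕ) (j : Fin (n k)),
    Continuous fun y : Input n => N.hid y k j
  | 0, j => by
      exact PiLp.continuous_apply 2 (fun _ => ℝ) j
  | (k+1), j => by
      have : Continuous fun y : Input n => (N.W k).mulVec (N.hid y k) j + N.b k j := by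
        simp only [Matrix.mulVec, dotProduct]
        exact (continuous_finset_sum _ fun i _ =>
          continuous_const.mul (continuous_hid k i)).add continuous_const
      exact this.max continuous_const

lemma continuous_preact (k : ℕ) (j : Fin (n (k+1))) :
    Continuous fun y : Input n => N.preact y k j := by
  simp only [preact, Matrix.mulVec, dotProduct]
  exact (continuous_finset_sum _ fun i _ =>
    continuous_const.mul (N.continuous_hid k i)).add continuous_const

end Net

/-- Lemma 4: for every `x` there is `ε* > 0` with
`B_{ε*}(0) ∩ {v : H(x+v) = H(x)} = B_{ε*}(0) ∩ Ker^C(x)`. -/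
theorem statement7 {L : ℕ} {n : ℕ → ℕ} (N : Net L n) (x : Input n) :
    ∃ ε > 0,
      ball (0 : Input n) ε ∩
          {v : Input n | ∀ p : Idx n, p.1 < L → N.Hpat (x + v) p.1 p.2 = N.Hpat x p.1 p.2} =
        ball (0 : Input n) ε ∩ N.KerC x := by
  classical
  set s : Pat n := fun k j => if 0 < N.preact x k j then (1:ℝ) else 0 with hs
  have hcompat_x : ∀ (k : ℕ) (j : Fin (n (k+1))),
      max (N.preact x k j) 0 = s k j * N.preact x k j := by
    intro k j
    by_cases h : 0 < N.preact x k j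
    · simp [hs, h, max_eq_left h.le]
    · simp [hs, h, max_eq_right (not_lt.mp h)]
  have hxs : ∀ k, N.hid x k = N.shid s x k := fun k =>
    N.hid_eq_shid s x k fun k' _ j => hcompat_x k' j
  have hpre_x : ∀ (k : ℕ) (j : Fin (n (k+1))), N.preact x k j = N.spreact s x k j := by
    intro k j; simp only [Net.preact, Net.spreact, hxs]
  -- local sign preservation
  have hev : ∀ᶠ y in 𝓝 x, ∀ k : Fin L, ∀ j : Fin (n (k.1+1)),
      (0 < N.preact x k.1 j → 0 < N.preact y k.1 j) ∧
      (N.preact x k.1 j < 0 → N.preact y k.1 j < 0) := by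
    rw [eventually_all]
    intro k
    rw [eventually_all]
    intro j
    rcases lt_trichotomy (N.preact x k.1 j) 0 with h | h | h
    · have h1 : ∀ᶠ y in 𝓝 x, N.preact y k.1 j < 0 :=
        Filter.Tendsto.eventually_lt_const h ((N.continuous_preact k.1 j).tendsto x)
      filter_upwards [h1] with y hy
      exact ⟨fun hc => absurd (hc.trans h) (lt_irrefl 0), fun _ => hy⟩
    · refine Eventually.of_forall fun y => ⟨fun hc => ?_, fun hc => ?_⟩ <;>
        rw [h] at hc <;> exact absurd hc (lt_irrefl 0)
    · have h1 : ∀ᶠ y in 𝓝 x, 0 < N.preact y k.1 j :=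
        Filter.Tendsto.eventually_const_lt h ((N.continuous_preact k.1 j).tendsto x)
      filter_upwards [h1] with y hy
      exact ⟨fun _ => hy, fun hc => absurd (h.trans hc) (lt_irrefl 0)⟩
  obtain ⟨ε, hε, hball⟩ := Metric.eventually_nhds_iff.mp hev
  have hP : ∀ y : Input n, dist y x < ε → ∀ k, k < L → ∀ j : Fin (n (k+1)),
      (0 < N.preact x k j → 0 < N.preact y k j) ∧
      (N.preact x k j < 0 → N.preact y k j < 0) := by
    intro y hy k hk j
    exact hball hy ⟨k, hk⟩ j
  have hcompat : ∀ y : Input n, dist y x < ε → ∀ k, k < L →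
      (∀ j, N.preact x k j = 0 → N.preact y k j = 0) →
      ∀ j, max (N.preact y k j) 0 = s k j * N.preact y k j := by
    intro y hy k hk hz j
    rcases lt_trichotomy (N.preact x k j) 0 with h | h | h
    · have hyneg := (hP y hy k hk j).2 h
      simp [hs, h.not_gt, max_eq_right hyneg.le]
    · simp [hs, h, hz j h]
    · have hypos := (hP y hy k hk j).1 h
      simp [hs, h, max_eq_left hypos.le]
  have hypre : ∀ y : Input n, dist y x < ε →
      (∀ k, k < L → ∀ j, N.preact x k j = 0 → N.preact y k j = 0) →
      ∀ k, k < L → ∀ j, N.preact y k j = N.spreact s y k j := by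
    intro y hy hz k hk j
    have heq : N.hid y k = N.shid s y k :=
      N.hid_eq_shid s y k fun k' hk' j' =>
        hcompat y hy k' (hk'.trans hk) (hz k' (hk'.trans hk)) j'
    simp only [Net.preact, Net.spreact, heq]
  have hZZ' : ∀ y : Input n, dist y x < ε →
      (∀ k, k < L → ∀ j, N.preact x k j = 0 → N.preact y k j = 0) →
      ∀ k, k < L → ∀ j, N.preact x k j = 0 → N.spreact s y k j = 0 := by
    intro y hy hz k hk j hj
    rw [← hypre y hy hz k hk j]
    exact hz k hk j hj
  have hZ'Z : ∀ y : Input n, dist y x < ε →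
      (∀ k, k < L → ∀ j, N.preact x k j = 0 → N.spreact s y k j = 0) →
      ∀ k, k < L → ∀ j, N.preact x k j = 0 → N.preact y k j = 0 := by
    intro y hy hz'
    have main : ∀ m, ∀ k, k < m → k < L → ∀ j, N.preact x k j = 0 → N.preact y k j = 0 := by
      intro m
      induction m with
      | zero => intro k hk; exact absurd hk (Nat.not_lt_zero k)
      | succ m ih =>
        intro k hk hkL j hj
        rcases Nat.lt_or_ge k m with h | h
        · exact ih k h hkL j hj
        · have hkm : k = m := le_antisymm (Nat.lt_succ_iff.mp hk) h
          subst hkm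
          have heq : N.hid y k = N.shid s y k :=
            N.hid_eq_shid s y k fun k' hk' j' =>
              hcompat y hy k' (hk'.trans hkL)
                (fun j'' hj'' => ih k' hk' (hk'.trans hkL) j'' hj'') j'
          have hpe : N.preact y k j = N.spreact s y k j := by
            simp only [Net.preact, Net.spreact, heq]
          rw [hpe]
          exact hz' k hkL j hj
    exact fun k hk => main (k+1) k (Nat.lt_succ_self k) hk
  have hVsmul : ∀ (v : Input n) (t : ℝ),
      (∀ k, k < L → ∀ j, N.preact x k j = 0 → N.spreact s (x + v) k j = 0) →
      ∀ k, k < L → ∀ j, N.preact x k j = 0 → N.spreact s (x + t • v) k j = 0 := by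
    intro v t hv k hk j hj
    rw [N.spreact_line s x v t k j, hv k hk j hj, ← hpre_x k j, hj]
    ring
  have hHZ : ∀ y : Input n, dist y x < ε →
      ((∀ p : Idx n, p.1 < L → N.Hpat y p.1 p.2 = N.Hpat x p.1 p.2) ↔
       (∀ k, k < L → ∀ j, N.preact x k j = 0 → N.preact y k j = 0)) := by
    intro y hy
    constructor
    · intro hH k hk j hj
      have h1 := hH ⟨k, j⟩ hk
      rw [Net.Hpat, Net.Hpat, hj, Real.sign_zero] at h1
      exact Real.sign_eq_zero_iff.mp h1
    · intro hz p hp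
      rcases lt_trichotomy (N.preact x p.1 p.2) 0 with h | h | h
      · have h1 := (hP y hy p.1 hp p.2).2 h
        rw [Net.Hpat, Net.Hpat, Real.sign_of_neg h1, Real.sign_of_neg h]
      · rw [Net.Hpat, Net.Hpat, h, hz p.1 hp p.2 h, Real.sign_zero]
      · have h1 := (hP y hy p.1 hp p.2).1 h
        rw [Net.Hpat, Net.Hpat, Real.sign_of_pos h1, Real.sign_of_pos h]
  refine ⟨ε, hε, ?_⟩
  have hdist : ∀ w : Input n, dist (x + w) x = ‖w‖ := fun w => by
    simp [dist_eq_norm]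
  ext v
  simp only [Set.mem_inter_iff, Set.mem_setOf_eq, mem_ball, dist_zero_right]
  constructor
  · rintro ⟨hvball, hH⟩
    refine ⟨hvball, ?_⟩
    have hyd : dist (x + v) x < ε := by rw [hdist]; exact hvball
    have hz := (hHZ (x + v) hyd).mp hH
    have hz' := hZZ' (x + v) hyd hz
    refine ⟨ε / (‖v‖ + 1), by positivity, fun t ht p hp => ?_⟩
    have htv : ‖t • v‖ < ε := by
      rw [norm_smul, Real.norm_eq_abs]
      calc |t| * ‖v‖ ≤ |t| * (‖v‖ + 1) := by nlinarith [abs_nonneg t, norm_nonneg v]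
        _ < ε := (lt_div_iff₀ (by positivity)).mp ht
    have hd2 : dist (x + t • v) x < ε := by rw [hdist]; exact htv
    have hz'tv := hVsmul v t hz'
    have hztv := hZ'Z (x + t • v) hd2 hz'tv
    exact ((hHZ (x + t • v) hd2).mpr hztv) p hp
  · rintro ⟨hvball, hker⟩
    refine ⟨hvball, ?_⟩
    obtain ⟨δ, hδ, hδk⟩ := hker
    set t : ℝ := min (δ/2) 1 with htd
    have ht0 : 0 < t := lt_min (by positivity) one_pos
    have htδ : |t| < δ := by
      rw [abs_of_pos ht0]
      exact lt_of_le_of_lt (min_le_left _ _) (by linarith)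
    have ht1 : t ≤ 1 := min_le_right _ _
    have hH := hδk t htδ
    have hd2 : dist (x + t • v) x < ε := by
      rw [hdist, norm_smul, Real.norm_eq_abs, abs_of_pos ht0]
      calc t * ‖v‖ ≤ 1 * ‖v‖ := by nlinarith [norm_nonneg v]
        _ < ε := by rw [one_mul]; exact hvball
    have hztv := (hHZ (x + t • v) hd2).mp hH
    have hz'tv := hZZ' (x + t • v) hd2 hztv
    have hz'v : ∀ k, k < L → ∀ j, N.preact x k j = 0 → N.spreact s (x + v) k j = 0 := by
      have h2 := hVsmul (t • v) t⁻¹ hz'tv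
      rwa [smul_smul, inv_mul_cancel₀ ht0.ne', one_smul] at h2
    have hd1 : dist (x + v) x < ε := by rw [hdist]; exact hvball
    have hzv := hZ'Z (x + v) hd1 hz'v
    exact fun p hp => ((hHZ (x + v) hd1).mpr hzv) p hp

end DRLP
end
end

section
/- For every x ∈ ℝ^{n_0} and every compatible activation pattern s ∈ S^C(x), the critical degrees of freedom satisfy df^C(x) ≥ n_0 − |C̃_s(x)|. -/
/-!
Formalization of the setting of "Deep ReLU Programming" (Hinz & van de Geer).

A feed-forward ReLU network with `L` hidden layers and widths `n 0, …, n (L+1)`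
(`n (L+1) = 1` for a real-valued network) is encoded by the structure `Net L n`
below, where `W k : Matrix (Fin (n (k+1))) (Fin (n k)) ℝ` and
`b k : Fin (n (k+1)) → ℝ` are the weight matrix and bias vector of layer `k+1`
(so the paper's `W_l, b_l` correspond to `W (l-1), b (l-1)` here).

A neuron `(l, j)` of the paper (layer `l ∈ {1, …, L}`, neuron `j`) is encoded as
the pair `⟨k, j⟩ : Idx n` with `k = l - 1`; membership in the index set `I`
corresponds to the condition `k < L`.
-/

noncomputable section
open Metric Filter Topology
open scoped Classical RealInnerProductSpace BigOperators

namespace DRLP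

section Aux

variable {L : ℕ} {n : ℕ → ℕ} (N : Net L n)

lemma Net.shid_zero (s : Pat n) (y : Input n) : N.shid s y 0 = fun i => y i := rfl

lemma Net.shid_succ (s : Pat n) (y : Input n) (k : ℕ) :
    N.shid s y (k+1) = fun j => s k j * ((N.W k).mulVec (N.shid s y k) j + N.b k j) := rfl

lemma Net.hid_succ (y : Input n) (k : ℕ) :
    N.hid y (k+1) = fun j => max (N.preact y k j) 0 := rfl

/-- The subjective hidden layers are affine in the input. -/
lemma Net.shid_affine_s8 (s : Pat n) (x w : Input n) :
    ∀ k, N.shid s (x + w) (k+1) = N.shid s x (k+1) +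
      (Matrix.diagonal (s k) * N.sMat s k).mulVec (fun i => w i) := by
  intro k
  induction k with
  | zero =>
    funext j
    have hx : (fun i => x i + w i) = (fun i => x i) + (fun i => w i) := rfl
    have hx2 : (fun i => (x + w) i) = (fun i => x i) + (fun i => w i) := rfl
    simp only [hx2, Net.shid_succ, Net.shid_zero, Pi.add_apply, Net.sMat, hx,
      Matrix.mulVec_add, ← Matrix.mulVec_mulVec, Matrix.mulVec_diagonal]
    ring
  | succ k ih =>
    funext j
    rw [N.shid_succ s (x + w) (k+1), N.shid_succ s x (k+1)]
    simp only [ih, Pi.add_apply, Matrix.mulVec_add, Net.sMat,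
      ← Matrix.mulVec_mulVec, Matrix.mulVec_diagonal]
    ring

/-- The subjective ReLU arguments are affine in the input. -/
lemma Net.spreact_affine_s8 (s : Pat n) (x w : Input n) (k : ℕ) (j : Fin (n (k+1))) :
    N.spreact s (x + w) k j = N.spreact s x k j + (N.sMat s k).mulVec (fun i => w i) j := by
  cases k with
  | zero =>
    have hx : (fun i => x i + w i) = (fun i => x i) + (fun i => w i) := rfl
    have hx2 : (fun i => (x + w) i) = (fun i => x i) + (fun i => w i) := rfl
    simp only [hx2, Net.spreact, Net.shid_zero, Net.sMat, hx, Matrix.mulVec_add, Pi.add_apply]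
    ring
  | succ k =>
    simp only [Net.spreact, N.shid_affine_s8 s x w k, Matrix.mulVec_add, Pi.add_apply,
      Net.sMat, ← Matrix.mulVec_mulVec]
    ring

/-- The linear part is given by the inner product with the normal vector. -/
lemma Net.mulVec_eq_inner (s : Pat n) (v : Input n) (k : ℕ) (j : Fin (n (k+1))) :
    (N.sMat s k).mulVec (fun i => v i) j = ⟪N.nvec s ⟨k, j⟩, v⟫ := by
  simp only [PiLp.inner_apply, RCLike.inner_apply, conj_trivial, Matrix.mulVec,
    dotProduct, Net.nvec, WithLp.ofLp_toLp]
  exact Finset.sum_congr rfl fun i _ => mul_comm _ _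

/-- If the activation pattern is compatible with the subjective signs at `y`, then the
objective and subjective hidden layers coincide at `y`. -/
lemma Net.hid_eq_shid_s8 (s : Pat n) (y : Input n) (hsp : IsPattern L s)
    (hc : ∀ k < L, ∀ j, (0 < N.spreact s y k j → s k j = 1) ∧
      (N.spreact s y k j < 0 → s k j = 0)) :
    ∀ k ≤ L, N.hid y k = N.shid s y k := by
  intro k
  induction k with
  | zero => intro _; rfl
  | succ k ih =>
    intro hk
    have hkL : k < L := hk
    have ih' := ih hkL.le
    funext j
    rw [N.hid_succ y k, N.shid_succ s y k]
    have hpre : N.preact y k j = N.spreact s y k j := by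
      simp only [Net.preact, Net.spreact, ih']
    show max (N.preact y k j) 0 = s k j * ((N.W k).mulVec (N.shid s y k) j + N.b k j)
    have hrhs : (N.W k).mulVec (N.shid s y k) j + N.b k j = N.spreact s y k j := rfl
    rw [hpre, hrhs]
    rcases lt_trichotomy (N.spreact s y k j) 0 with h | h | h
    · rw [(hc k hkL j).2 h, max_eq_right h.le, zero_mul]
    · rcases hsp k hkL j with h0 | h0 <;> simp [h, h0]
    · rw [(hc k hkL j).1 h, max_eq_left h.le, one_mul]

/-- For `s ∈ S^C(x)`, the hidden layers coincide at `x` itself. -/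
lemma Net.hid_eq_shid_self (s : Pat n) (x : Input n) (hs : s ∈ N.SC x) :
    ∀ k ≤ L, N.hid x k = N.shid s x k := by
  obtain ⟨hsp, hcomp⟩ := hs
  intro k
  induction k with
  | zero => intro _; rfl
  | succ k ih =>
    intro hk
    have hkL : k < L := hk
    have ih' := ih hkL.le
    funext j
    rw [N.hid_succ x k, N.shid_succ s x k]
    have hpre : N.preact x k j = N.spreact s x k j := by
      simp only [Net.preact, Net.spreact, ih']
    have hcj := hcomp k hkL j
    show max (N.preact x k j) 0 = s k j * ((N.W k).mulVec (N.shid s x k) j + N.b k j)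
    have hrhs : (N.W k).mulVec (N.shid s x k) j + N.b k j = N.spreact s x k j := rfl
    rw [hrhs, ← hpre]
    rcases lt_trichotomy (N.preact x k j) 0 with h | h | h
    · have hsign : N.Hpat x k j = -1 := Real.sign_of_neg h
      have hs0 : s k j = 0 := by
        rcases hsp k hkL j with h0 | h1
        · exact h0
        · exfalso; rw [hsign, h1] at hcj; norm_num at hcj
      rw [hs0, max_eq_right h.le, zero_mul]
    · rcases hsp k hkL j with h0 | h0 <;> simp [h, h0]
    · have hsign : N.Hpat x k j = 1 := Real.sign_of_pos h
      have hs1 : s k j = 1 := by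
        rcases hsp k hkL j with h0 | h1
        · exfalso; rw [hsign, h0] at hcj; norm_num at hcj
        · exact h1
      rw [hs1, max_eq_left h.le, one_mul]

lemma Net.spreact_eq_preact_self (s : Pat n) (x : Input n) (hs : s ∈ N.SC x)
    (k : ℕ) (hk : k < L) (j : Fin (n (k+1))) :
    N.spreact s x k j = N.preact x k j := by
  simp only [Net.preact, Net.spreact, N.hid_eq_shid_self s x hs k hk.le]

lemma Net.sHpat_eq_Hpat_self (s : Pat n) (x : Input n) (hs : s ∈ N.SC x)
    (k : ℕ) (hk : k < L) (j : Fin (n (k+1))) :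
    N.sHpat s x k j = N.Hpat x k j := by
  simp only [Net.sHpat, Net.Hpat, N.spreact_eq_preact_self s x hs k hk]

/-- If the subjective signs at `y` agree with those at `x` (on all hidden neurons), then
the objective signs at `y` agree with those at `x` as well. -/
lemma Net.Hpat_eq_of_sHpat_eq (s : Pat n) (x y : Input n) (hs : s ∈ N.SC x)
    (hsame : ∀ k < L, ∀ j, N.sHpat s y k j = N.sHpat s x k j) :
    ∀ k < L, ∀ j, N.Hpat y k j = N.Hpat x k j := by
  obtain ⟨hsp, hcomp⟩ := hs
  have hc : ∀ k < L, ∀ j, (0 < N.spreact s y k j → s k j = 1) ∧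
      (N.spreact s y k j < 0 → s k j = 0) := by
    intro k hk j
    have hH : N.sHpat s y k j = N.Hpat x k j := by
      rw [hsame k hk j, N.sHpat_eq_Hpat_self s x ⟨hsp, hcomp⟩ k hk j]
    have hcj := hcomp k hk j
    constructor
    · intro hpos
      have h1 : N.Hpat x k j = 1 := by rw [← hH]; exact Real.sign_of_pos hpos
      rcases hsp k hk j with h0 | h1'
      · exfalso; rw [h1, h0] at hcj; norm_num at hcj
      · exact h1'
    · intro hneg
      have h1 : N.Hpat x k j = -1 := by rw [← hH]; exact Real.sign_of_neg hneg
      rcases hsp k hk j with h0 | h1'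
      · exact h0
      · exfalso; rw [h1, h1'] at hcj; norm_num at hcj
  have hhid := N.hid_eq_shid_s8 s y hsp hc
  intro k hk j
  have hpre : N.preact y k j = N.spreact s y k j := by
    simp only [Net.preact, Net.spreact, hhid k hk.le]
  have : N.Hpat y k j = N.sHpat s y k j := by
    simp only [Net.Hpat, Net.sHpat, hpre]
  rw [this, hsame k hk j, N.sHpat_eq_Hpat_self s x ⟨hsp, hcomp⟩ k hk j]

end Aux

/-- Lemma 5: for every `x` and every compatible `s ∈ S^C(x)`,
`df^C(x) ≥ n_0 - |C̃_s(x)|`. -/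
theorem statement8 {L : ℕ} {n : ℕ → ℕ} (N : Net L n) (x : Input n) (s : Pat n)
    (hs : s ∈ N.SC x) :
    (n 0 : ℤ) - ({p : Idx n | N.sCritical s x p}.ncard : ℤ) ≤ (N.dfC x : ℤ) := by
  classical
  set C : Set (Idx n) := {p : Idx n | N.sCritical s x p} with hC
  -- finiteness of C
  have hCfin : C.Finite := by
    have hbig : (⋃ k ∈ Set.Iio L,
        Set.range (fun j : Fin (n (k+1)) => (⟨k, j⟩ : Idx n))).Finite :=
      (Set.finite_Iio L).biUnion (fun k _ => Set.finite_range _)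
    refine hbig.subset ?_
    rintro ⟨k, j⟩ hp
    exact Set.mem_biUnion (show (k:ℕ) < L from hp.1) ⟨j, rfl⟩
  set V : Submodule ℝ (Input n) := (Submodule.span ℝ (N.nvec s '' C))ᗮ with hV
  -- Step 1: V ⊆ KerC x
  have hsub : (V : Set (Input n)) ⊆ N.KerC x := by
    intro v hv
    have hvinner : ∀ p ∈ C, ⟪N.nvec s p, v⟫ = 0 := fun p hp =>
      (Submodule.mem_orthogonal _ _).1 hv _ (Submodule.subset_span ⟨p, hp, rfl⟩)
    -- eventually, subjective signs of noncritical neurons are unchanged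
    have hev : ∀ᶠ y in 𝓝 x, ∀ p ∈ (Finset.range L).sigma
        (fun k => (Finset.univ : Finset (Fin (n (k+1))))),
        ¬ N.sCritical s x p → N.sHpat s y p.1 p.2 = N.sHpat s x p.1 p.2 := by
      rw [eventually_all_finset]
      rintro ⟨k, j⟩ hpF
      simp only [Finset.mem_sigma, Finset.mem_range] at hpF
      by_cases hcrit : N.sCritical s x ⟨k, j⟩
      · exact Filter.Eventually.of_forall (fun y h => absurd hcrit h)
      · rw [Net.sCritical] at hcrit
        push_neg at hcrit
        obtain ⟨ε, hε, hloc⟩ := hcrit hpF.1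
        rw [Metric.eventually_nhds_iff_ball]
        exact ⟨ε, hε, fun y hy _ => hloc y x hy (by simpa using hε)⟩
    obtain ⟨ε, hε, hball⟩ := Metric.eventually_nhds_iff_ball.1 hev
    refine ⟨ε / (‖v‖ + 1), by positivity, fun t ht p hpL => ?_⟩
    have hdist : dist (x + t • v) x < ε := by
      rw [dist_eq_norm, add_sub_cancel_left, norm_smul, Real.norm_eq_abs]
      calc |t| * ‖v‖ ≤ |t| * (‖v‖ + 1) := by
            apply mul_le_mul_of_nonneg_left (by linarith) (abs_nonneg t)
          _ < ε / (‖v‖ + 1) * (‖v‖ + 1) := by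
            apply mul_lt_mul_of_pos_right ht (by positivity)
          _ = ε := by field_simp
    -- subjective signs at x + t•v agree with those at x, for all hidden neurons
    have hsame : ∀ k < L, ∀ j, N.sHpat s (x + t • v) k j = N.sHpat s x k j := by
      intro k hk j
      by_cases hcrit : N.sCritical s x ⟨k, j⟩
      · -- critical: preactivation literally unchanged since v ⊥ nvec
        have : N.spreact s (x + t • v) k j = N.spreact s x k j := by
          rw [N.spreact_affine_s8 s x (t • v) k j, N.mulVec_eq_inner s (t • v) k j]
          have : ⟪N.nvec s ⟨k, j⟩, t • v⟫ = t * ⟪N.nvec s ⟨k, j⟩, v⟫ :=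
            real_inner_smul_right _ _ _
          rw [this, hvinner ⟨k, j⟩ hcrit]
          ring
        simp [Net.sHpat, this]
      · exact hball _ hdist ⟨k, j⟩ (by simp [Finset.mem_sigma, hk]) hcrit
    exact N.Hpat_eq_of_sHpat_eq s x (x + t • v) hs hsame p.1 hpL p.2
  -- Step 2: dimension count
  have hfd : FiniteDimensional ℝ (Input n) := by infer_instance
  have hVle : V ≤ Submodule.span ℝ (N.KerC x) := by
    rw [← Submodule.span_eq V]
    exact Submodule.span_mono hsub
  have hdf : Module.finrank ℝ V ≤ N.dfC x := Submodule.finrank_mono hVle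
  have horth : Module.finrank ℝ (Submodule.span ℝ (N.nvec s '' C)) +
      Module.finrank ℝ V = n 0 := by
    rw [hV, Submodule.finrank_add_finrank_orthogonal]
    simp [finrank_euclideanSpace]
  have hspan : Module.finrank ℝ (Submodule.span ℝ (N.nvec s '' C)) ≤ C.ncard := by
    have hCf : (N.nvec s '' C).Finite := hCfin.image _
    have h1 : Module.finrank ℝ (Submodule.span ℝ ((hCf.toFinset : Finset (Input n)) :
        Set (Input n))) ≤ hCf.toFinset.card := finrank_span_finset_le_card _
    rw [Set.Finite.coe_toFinset] at h1
    calc Module.finrank ℝ (Submodule.span ℝ (N.nvec s '' C)) ≤ hCf.toFinset.card := h1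
      _ = (N.nvec s '' C).ncard := (Set.ncard_eq_toFinset_card _ hCf).symm
      _ ≤ C.ncard := Set.ncard_image_le hCfin
  omega


end DRLP
end
end
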